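/- Let s, t be positive integers, p ∈ ℂ, q ∈ ℂ with q ≠ 0, v > 0, and f(z) = z^{s+t} + p z^t + q. Define the hypotrochoid γ : [0,2π) → ℂ, γ(φ) = v^s·e^{i·s·φ} + |q|·v^{−t}·e^{i·(arg(q) − t·φ)}. Then f has two distinct roots a ≠ b with |a| = |b| = v if and only if there exist φ, ψ ∈ [0, 2π) with φ ≠ ψ and γ(φ) = γ(ψ) = −p (i.e., −p is a real double point of the hypotrochoid γ). -/

import Mathlib

open Polynomial

/-- The circle parametrization is injective on `[0, 2π)`. -/
lemma hypo_inj_aux {v : ℝ} (hv : 0 < v) {φ ψ : ℝ}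
    (hφ : φ ∈ Set.Ico (0 : ℝ) (2 * Real.pi)) (hψ : ψ ∈ Set.Ico (0 : ℝ) (2 * Real.pi))
    (h : (v : ℂ) * Complex.exp (Complex.I * φ) = (v : ℂ) * Complex.exp (Complex.I * ψ)) :
    φ = ψ := by
  have hv' : (v : ℂ) ≠ 0 := by exact_mod_cast hv.ne'
  have h2 := mul_left_cancel₀ hv' h
  rw [Complex.exp_eq_exp_iff_exists_int] at h2
  obtain ⟨n, hn⟩ := h2
  have him := congrArg Complex.im hn
  simp [Complex.mul_im, Complex.add_im] at him
  have hπ := Real.pi_pos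
  obtain ⟨hφ0, hφ2⟩ := hφ
  obtain ⟨hψ0, hψ2⟩ := hψ
  have h3 : (-1 : ℝ) < n := by nlinarith
  have h4 : (n : ℝ) < 1 := by nlinarith
  have h3' : (-1 : ℤ) < n := by exact_mod_cast h3
  have h4' : n < 1 := by exact_mod_cast h4
  have hn0 : n = 0 := by omega
  rw [hn0] at him
  push_cast at him
  linarith

/-- Every complex number of norm `v` is `v e^{iφ}` for some `φ ∈ [0, 2π)`. -/
lemma hypo_exists_angle {v : ℝ} (hv : 0 < v) {a : ℂ} (ha : ‖a‖ = v) :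
    ∃ φ ∈ Set.Ico (0 : ℝ) (2 * Real.pi), a = (v : ℂ) * Complex.exp (Complex.I * φ) := by
  refine ⟨toIcoMod Real.two_pi_pos 0 a.arg, ?_, ?_⟩
  · simpa using toIcoMod_mem_Ico Real.two_pi_pos 0 a.arg
  · have hdef : toIcoMod Real.two_pi_pos 0 a.arg
        = a.arg - (toIcoDiv Real.two_pi_pos 0 a.arg : ℝ) * (2 * Real.pi) := by
      simp only [toIcoMod, zsmul_eq_mul]
    rw [hdef]
    have h1 : Complex.exp (Complex.I * ((a.arg : ℝ) - (toIcoDiv Real.two_pi_pos 0 a.arg : ℝ)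
        * (2 * Real.pi) : ℝ)) = Complex.exp ((a.arg : ℂ) * Complex.I) := by
      rw [show (Complex.I * ((a.arg : ℝ) - (toIcoDiv Real.two_pi_pos 0 a.arg : ℝ)
          * (2 * Real.pi) : ℝ) : ℂ) = (a.arg : ℂ) * Complex.I
          + (-(toIcoDiv Real.two_pi_pos 0 a.arg) : ℤ) * (2 * Real.pi * Complex.I) by
        push_cast; ring]
      rw [Complex.exp_add, Complex.exp_int_mul_two_pi_mul_I, mul_one]
    rw [h1, ← ha, Complex.norm_mul_exp_arg_mul_I]

/-- Key algebraic equivalence: `v e^{iφ}` is a root of the trinomial iff `γ(φ) = -p`. -/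
lemma hypo_key (s t : ℕ) (p q : ℂ) (v : ℝ) (hv : 0 < v) (φ : ℝ) :
    (X ^ (s + t) + C p * X ^ t + C q : Polynomial ℂ).eval
      ((v : ℂ) * Complex.exp (Complex.I * φ)) = 0 ↔
    (v : ℂ) ^ s * Complex.exp (Complex.I * s * φ)
      + ((‖q‖ : ℝ) : ℂ) * (v : ℂ) ^ (-(t : ℤ)) *
          Complex.exp (Complex.I * ((q.arg : ℂ) - t * φ)) = -p := by
  set a : ℂ := (v : ℂ) * Complex.exp (Complex.I * φ) with ha_def
  have hv' : (v : ℂ) ≠ 0 := by exact_mod_cast hv.ne'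
  have ha : a ≠ 0 := mul_ne_zero hv' (Complex.exp_ne_zero _)
  have hat : a ^ t ≠ 0 := pow_ne_zero _ ha
  have hvt : ((v : ℂ) ^ t) ≠ 0 := pow_ne_zero _ hv'
  have ea : ∀ n : ℕ, a ^ n = (v : ℂ) ^ n * Complex.exp (Complex.I * n * φ) := by
    intro n
    rw [ha_def, mul_pow, ← Complex.exp_nat_mul]
    ring_nf
  have hzpow : (v : ℂ) ^ (-(t : ℤ)) = ((v : ℂ) ^ t)⁻¹ := by
    rw [zpow_neg, zpow_natCast]
  set Γ : ℂ := (v : ℂ) ^ s * Complex.exp (Complex.I * s * φ)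
      + ((‖q‖ : ℝ) : ℂ) * (v : ℂ) ^ (-(t : ℤ)) *
          Complex.exp (Complex.I * ((q.arg : ℂ) - t * φ)) with hΓ_def
  have key2 : Γ * a ^ t = a ^ (s + t) + q := by
    rw [hΓ_def, ea t, ea (s + t), hzpow]
    have e1 : Complex.exp (Complex.I * s * φ) * Complex.exp (Complex.I * t * φ)
        = Complex.exp (Complex.I * (s + t : ℕ) * φ) := by
      rw [← Complex.exp_add]
      push_cast
      ring_nf
    have e2 : Complex.exp (Complex.I * ((q.arg : ℂ) - t * φ)) * Complex.exp (Complex.I * t * φ)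
        = Complex.exp ((q.arg : ℂ) * Complex.I) := by
      rw [← Complex.exp_add]
      ring_nf
    have e3 : ((‖q‖ : ℝ) : ℂ) * Complex.exp ((q.arg : ℂ) * Complex.I) = q :=
      Complex.norm_mul_exp_arg_mul_I q
    calc ((v : ℂ) ^ s * Complex.exp (Complex.I * s * φ)
          + ((‖q‖ : ℝ) : ℂ) * ((v : ℂ) ^ t)⁻¹ *
              Complex.exp (Complex.I * ((q.arg : ℂ) - t * φ)))
          * ((v : ℂ) ^ t * Complex.exp (Complex.I * t * φ))
        = (v : ℂ) ^ s * (v : ℂ) ^ t *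
            (Complex.exp (Complex.I * s * φ) * Complex.exp (Complex.I * t * φ))
          + ((‖q‖ : ℝ) : ℂ) * (((v : ℂ) ^ t)⁻¹ * (v : ℂ) ^ t) *
            (Complex.exp (Complex.I * ((q.arg : ℂ) - t * φ))
              * Complex.exp (Complex.I * t * φ)) := by ring
      _ = (v : ℂ) ^ (s + t) * Complex.exp (Complex.I * (s + t : ℕ) * φ) + q := by
          rw [e1, e2, inv_mul_cancel₀ hvt, mul_one, e3, pow_add]
      _ = _ := rfl
  simp only [eval_add, eval_mul, eval_pow, eval_X, eval_C]
  constructor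
  · intro h
    have h2 : Γ * a ^ t = -p * a ^ t := by
      rw [key2]; linear_combination h
    exact mul_right_cancel₀ hat h2
  · intro h
    have h2 : (-p) * a ^ t = a ^ (s + t) + q := by rw [← h, key2]
    linear_combination -h2

/-- The trinomial `f = z^(s+t) + p z^t + q` has two distinct roots of identical
norm `v` if and only if `-p` is a real double point of the associated
hypotrochoid `γ(φ) = v^s e^(isφ) + |q| v^(-t) e^(i(arg q - tφ))`. -/
theorem two_distinct_roots_iff_double_point (s t : ℕ) (hs : 0 < s) (ht : 0 < t)
    (p q : ℂ) (hq : q ≠ 0) (v : ℝ) (hv : 0 < v) (γ : ℝ → ℂ)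
    (hγ : γ = fun φ : ℝ => (v : ℂ) ^ s * Complex.exp (Complex.I * s * φ)
      + ((‖q‖ : ℝ) : ℂ) * (v : ℂ) ^ (-(t : ℤ)) *
          Complex.exp (Complex.I * ((q.arg : ℂ) - t * φ))) :
    (∃ a b : ℂ, a ≠ b ∧
      (X ^ (s + t) + C p * X ^ t + C q : Polynomial ℂ).eval a = 0 ∧
      (X ^ (s + t) + C p * X ^ t + C q : Polynomial ℂ).eval b = 0 ∧
      ‖a‖ = v ∧ ‖b‖ = v) ↔
    (∃ φ ∈ Set.Ico (0 : ℝ) (2 * Real.pi), ∃ ψ ∈ Set.Ico (0 : ℝ) (2 * Real.pi),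
      φ ≠ ψ ∧ γ φ = -p ∧ γ ψ = -p) := by
  subst hγ
  constructor
  · rintro ⟨a, b, hab, hfa, hfb, hav, hbv⟩
    obtain ⟨φ, hφ, hφa⟩ := hypo_exists_angle hv hav
    obtain ⟨ψ, hψ, hψb⟩ := hypo_exists_angle hv hbv
    refine ⟨φ, hφ, ψ, hψ, ?_, ?_, ?_⟩
    · intro h
      exact hab (by rw [hφa, hψb, h])
    · exact (hypo_key s t p q v hv φ).mp (by rw [← hφa]; exact hfa)
    · exact (hypo_key s t p q v hv ψ).mp (by rw [← hψb]; exact hfb)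
  · rintro ⟨φ, hφ, ψ, hψ, hne, hγφ, hγψ⟩
    refine ⟨(v : ℂ) * Complex.exp (Complex.I * φ), (v : ℂ) * Complex.exp (Complex.I * ψ),
      ?_, (hypo_key s t p q v hv φ).mpr hγφ, (hypo_key s t p q v hv ψ).mpr hγψ, ?_, ?_⟩
    · intro h
      exact hne (hypo_inj_aux hv hφ hψ h)
    · simp [Complex.norm_exp, abs_of_pos hv, Complex.mul_re]
    · simp [Complex.norm_exp, abs_of_pos hv, Complex.mul_re]
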